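/- Let f > 0, g', κ_m, κ be real numbers with D := κ² + (g' + f·κ_m)² > 0, and define ν = √D/(2f), λ = (κ² + g'² − f²κ_m²)/(2f√D), μ = −κ·κ_m/√D. Then ν² − λ² − μ² = g'·κ_m/f. In particular, if f, g are smooth functions on an interval with f'² + g'² = 1 (so that g'·κ_m = −f'' where κ_m = f'g'' − g'f''), then ν² − λ² − μ² = −f''/f, i.e. the Gauss curvature K = ν₁ν₂ − (λ² + μ²) of the meridian surface equals −f''/f. -/

import Mathlib

lemma meridian_alg (f g' κm κ : ℝ) (hf : 0 < f)
    (hD : 0 < κ ^ 2 + (g' + f * κm) ^ 2) :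
    (Real.sqrt (κ ^ 2 + (g' + f * κm) ^ 2) / (2 * f)) ^ 2 -
      ((κ ^ 2 + g' ^ 2 - f ^ 2 * κm ^ 2) /
        (2 * f * Real.sqrt (κ ^ 2 + (g' + f * κm) ^ 2))) ^ 2 -
      (-(κ * κm) / Real.sqrt (κ ^ 2 + (g' + f * κm) ^ 2)) ^ 2 =
    g' * κm / f := by
  set D := κ ^ 2 + (g' + f * κm) ^ 2 with hDdef
  have hs : Real.sqrt D ^ 2 = D := Real.sq_sqrt hD.le
  have hspos : 0 < Real.sqrt D := Real.sqrt_pos.mpr hD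
  have hfne : f ≠ 0 := hf.ne'
  have hsne : Real.sqrt D ≠ 0 := hspos.ne'
  field_simp
  have hs4 : Real.sqrt D ^ 4 = D ^ 2 := by rw [show (4:ℕ) = 2 * 2 from rfl, pow_mul, hs]
  simp only [mul_pow, hs, hs4]
  rw [hDdef]
  ring

theorem meridian_surface_gauss_curvature :
    (∀ f g' κm κ : ℝ, 0 < f → 0 < κ ^ 2 + (g' + f * κm) ^ 2 →
      (Real.sqrt (κ ^ 2 + (g' + f * κm) ^ 2) / (2 * f)) ^ 2 -
        ((κ ^ 2 + g' ^ 2 - f ^ 2 * κm ^ 2) /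
          (2 * f * Real.sqrt (κ ^ 2 + (g' + f * κm) ^ 2))) ^ 2 -
        (-(κ * κm) / Real.sqrt (κ ^ 2 + (g' + f * κm) ^ 2)) ^ 2 =
      g' * κm / f) ∧
    (∀ (I : Set ℝ), IsOpen I → I.OrdConnected →
      ∀ f g : ℝ → ℝ,
      (∀ u ∈ I, DifferentiableAt ℝ f u) →
      (∀ u ∈ I, DifferentiableAt ℝ (deriv f) u) →
      (∀ u ∈ I, DifferentiableAt ℝ g u) →
      (∀ u ∈ I, DifferentiableAt ℝ (deriv g) u) →
      (∀ u ∈ I, (deriv f u) ^ 2 + (deriv g u) ^ 2 = 1) →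
      ∀ u ∈ I, 0 < f u →
      ∀ κ : ℝ,
      ∀ κm : ℝ, κm = deriv f u * deriv (deriv g) u - deriv g u * deriv (deriv f) u →
      0 < κ ^ 2 + (deriv g u + f u * κm) ^ 2 →
      (Real.sqrt (κ ^ 2 + (deriv g u + f u * κm) ^ 2) / (2 * f u)) ^ 2 -
        ((κ ^ 2 + (deriv g u) ^ 2 - (f u) ^ 2 * κm ^ 2) /
          (2 * f u * Real.sqrt (κ ^ 2 + (deriv g u + f u * κm) ^ 2))) ^ 2 -
        (-(κ * κm) / Real.sqrt (κ ^ 2 + (deriv g u + f u * κm) ^ 2)) ^ 2 =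
      -(deriv (deriv f) u) / f u) := by
  constructor
  · exact meridian_alg
  · intro I hI _ f g hf1 hf2 hg1 hg2 hunit u hu hfpos κ κm hκm hD
    -- derivative of the unit-speed relation
    have hderiv : deriv f u * deriv (deriv f) u + deriv g u * deriv (deriv g) u = 0 := by
      have h1 : HasDerivAt (fun x => (deriv f x) ^ 2 + (deriv g x) ^ 2)
          (2 * deriv f u * deriv (deriv f) u + 2 * deriv g u * deriv (deriv g) u) u := by
        have := ((hf2 u hu).hasDerivAt.pow 2).add ((hg2 u hu).hasDerivAt.pow 2)
        exact this.congr_deriv (by norm_num)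
      have h2 : (fun x => (deriv f x) ^ 2 + (deriv g x) ^ 2) =ᶠ[nhds u] fun _ => (1 : ℝ) := by
        filter_upwards [hI.mem_nhds hu] with x hx using hunit x hx
      have h3 : deriv (fun x => (deriv f x) ^ 2 + (deriv g x) ^ 2) u = 0 := by
        rw [Filter.EventuallyEq.deriv_eq h2, deriv_const]
      have h4 := h1.deriv
      rw [h3] at h4
      linarith
    have key : deriv g u * κm = -(deriv (deriv f) u) := by
      have hunit' := hunit u hu
      rw [hκm]; linear_combination deriv f u * hderiv - deriv (deriv f) u * hunit'
    have := meridian_alg (f u) (deriv g u) κm κ hfpos hD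
    rw [key] at this
    simpa using this
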